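/- Let Y = {v_A : A is a 4-element subset of {1,…,9} with {1,2} ⊆ A}, where v_A ∈ H_8 is the point whose i-th coordinate equals 2/3 for i ∈ A and −1/3 for i ∉ A. Then X = R_8 ∪ Y is a maximal 2-distance set in H_8 with exactly 30 points, whose two distances are √2 and 2: every pair of distinct points of X is at distance √2 or 2, both distances occur, and for every z ∈ H_8 with z ∉ X the set X ∪ {z} is not a 2-distance set. -/

import Mathlib

noncomputable section

open scoped BigOperators Classical

/-- The set of Euclidean distances between distinct points of `X`. -/
def distSet {m : ℕ} (X : Set (EuclideanSpace ℝ (Fin m))) : Set ℝ :=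
  {r | ∃ x ∈ X, ∃ y ∈ X, x ≠ y ∧ dist x y = r}

/-- `X` is a 2-distance set: exactly two distances occur between distinct points. -/
def IsTwoDistSet {m : ℕ} (X : Set (EuclideanSpace ℝ (Fin m))) : Prop :=
  (distSet X).ncard = 2

/-- The affine hyperplane `H_d = {x ∈ ℝ^{d+1} : ∑ x_i = 1}`. -/
def Hplane (d : ℕ) : Set (EuclideanSpace ℝ (Fin (d+1))) :=
  {x | ∑ i, x i = 1}

/-- The regular simplex `R_d`: the standard basis vectors of `ℝ^{d+1}`. -/
def simplex (d : ℕ) : Set (EuclideanSpace ℝ (Fin (d+1))) :=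
  Set.range (fun i => EuclideanSpace.single i (1:ℝ))

/-- The constant `c = (1 - (d+1-k)β)/(d+1)`. -/
def cval (d k : ℕ) (β : ℝ) : ℝ := (1 - ((d:ℝ) + 1 - (k:ℝ)) * β) / ((d:ℝ) + 1)

/-- The set `T_d(k,β)` of points of `H_d` all of whose coordinates lie in `{c, c+β}`,
with exactly `k` coordinates equal to `c`. -/
def Tset (d k : ℕ) (β : ℝ) : Set (EuclideanSpace ℝ (Fin (d+1))) :=
  {x | x ∈ Hplane d ∧ (∀ i, x i = cval d k β ∨ x i = cval d k β + β) ∧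
    {i | x i = cval d k β}.ncard = k}

/-- The point of `H_8` attached to a 4-subset `A` of `{1,…,9}`:
`2/3` on `A`, `-1/3` elsewhere. -/
def vFour (A : Finset (Fin (8+1))) : EuclideanSpace ℝ (Fin (8+1)) :=
  WithLp.toLp 2 (fun i => if i ∈ A then (2/3 : ℝ) else -1/3)


namespace S18
abbrev E := EuclideanSpace ℝ (Fin 9)
def pt (s : Finset (Fin 9)) (a b : ℝ) : E := WithLp.toLp 2 (fun i => if i ∈ s then a else b)

set_option linter.unreachableTactic false
set_option linter.unusedTactic false

lemma sum_indicator (s : Finset (Fin 9)) (c : ℝ) :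
    ∑ i : Fin 9, (if i ∈ s then c else 0) = s.card * c := by
  rw [Finset.sum_ite_mem, Finset.univ_inter, Finset.sum_const, nsmul_eq_mul]

lemma key (s t : Finset (Fin 9)) (a b c d : ℝ) :
    ∑ i : Fin 9, (pt s a b i - pt t c d i)^2
      = 9*(b-d)^2 + s.card * ((a-d)^2 - (b-d)^2) + t.card * ((b-c)^2 - (b-d)^2)
        + (s ∩ t).card * ((a-c)^2 - (a-d)^2 - (b-c)^2 + (b-d)^2) := by
  have h : ∀ i : Fin 9, (pt s a b i - pt t c d i)^2
      = (b-d)^2 + ((if i ∈ s then ((a-d)^2 - (b-d)^2) else 0)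
        + ((if i ∈ t then ((b-c)^2 - (b-d)^2) else 0)
        + (if i ∈ s ∩ t then ((a-c)^2 - (a-d)^2 - (b-c)^2 + (b-d)^2) else 0))) := by
    intro i
    simp only [pt, Finset.mem_inter]
    by_cases hs : i ∈ s <;> by_cases ht : i ∈ t <;> simp [hs, ht] <;> ring
  simp only [h]
  rw [Finset.sum_add_distrib, Finset.sum_add_distrib, Finset.sum_add_distrib,
    Finset.sum_const, sum_indicator, sum_indicator, sum_indicator]
  simp only [Finset.card_univ, Fintype.card_fin, nsmul_eq_mul]
  push_cast
  ring

lemma sum_pt (s : Finset (Fin 9)) (a b : ℝ) :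
    ∑ i, pt s a b i = s.card * (a - b) + 9 * b := by
  have h : ∀ i : Fin 9, pt s a b i = b + (if i ∈ s then (a-b) else 0) := by
    intro i; simp only [pt]; by_cases hs : i ∈ s <;> simp [hs]
  simp only [h]
  rw [Finset.sum_add_distrib, Finset.sum_const, sum_indicator]
  simp only [Finset.card_univ, Fintype.card_fin, nsmul_eq_mul]
  ring

lemma sq_pt (s : Finset (Fin 9)) (a b : ℝ) :
    ∑ i, (pt s a b i)^2 = 9*b^2 + s.card * (a^2 - b^2) := by
  have := key s ∅ a b 0 0
  simp only [pt, PiLp.toLp_apply, Finset.notMem_empty, if_false, sub_zero, Finset.inter_empty,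
    Finset.card_empty, Nat.cast_zero] at this
  rw [show ∑ i, (pt s a b i)^2 = ∑ i : Fin 9, (if i ∈ s then a else b)^2 from rfl]
  rw [this]; ring

lemma max_key (z : E) (hz : ∑ i, z i = 1)
    (hdS : ∀ j : Fin 9, (∑ i, (z i - pt {j} 1 0 i)^2) ∈ ({2,4} : Set ℝ))
    (hdV : ∀ A : Finset (Fin 9), A.card = 4 → (0:Fin 9) ∈ A → (1:Fin 9) ∈ A →
      (∑ i, (z i - pt A (2/3) (-1/3) i)^2) ∈ ({2,4} : Set ℝ)) :
    ∃ B : Finset (Fin 9), B.card = 4 ∧ (0:Fin 9) ∈ B ∧ (1:Fin 9) ∈ B ∧ z = vFour B := by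
  set S := ∑ i, (z i)^2 with hS
  have hsum : ∀ j, ∑ i, (z i - pt {j} 1 0 i)^2 = S - 2 * z j + 1 := by
    intro j
    have h : ∀ i : Fin 9, (z i - pt {j} 1 0 i)^2
        = (z i)^2 + (if i ∈ ({j} : Finset (Fin 9)) then 1 - 2 * z j else 0) := by
      intro i
      simp only [pt, Finset.mem_singleton]
      by_cases h : i = j
      · subst h; simp; ring
      · simp [h]
    simp only [h]
    rw [Finset.sum_add_distrib, sum_indicator]
    simp only [Finset.card_singleton, Nat.cast_one]
    ring
  set α := (S - 1) / 2 with hα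
  have hval : ∀ j, z j = α ∨ z j = α - 1 := by
    intro j
    rcases hdS j with h | h <;> rw [hsum j] at h
    · left; rw [hα]; linarith
    · right; rw [hα]; simp only [Set.mem_singleton_iff] at h; linarith
  set B := Finset.univ.filter (fun i => z i = α) with hB
  have hzpt : z = pt B α (α - 1) := by
    ext i
    by_cases h : z i = α
    · simp [pt, hB, h]
    · rcases hval i with h' | h'
      · exact absurd h' h
      · simp [pt, hB, h, h']
  set k := B.card with hk
  have hsum1 : (k:ℝ) * (α - (α-1)) + 9*(α-1) = 1 := by
    rw [← sum_pt, ← hzpt]; exact hz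
  have hsum2 : 9*(α-1)^2 + (k:ℝ) * (α^2 - (α-1)^2) = 2*α + 1 := by
    rw [← sq_pt, ← hzpt, ← hS]; rw [hα]; ring
  have hk47 : (k:ℝ) = 4 ∨ (k:ℝ) = 7 := by
    have h47 : ((k:ℝ) - 4) * ((k:ℝ) - 7) = 0 := by nlinarith [hsum1, hsum2]
    rcases mul_eq_zero.mp h47 with h | h
    · left; linarith
    · right; linarith
  rcases hk47 with hk4 | hk7
  · -- k = 4 : z = vFour B
    have hαv : α = 2/3 := by rw [hk4] at hsum1; linarith
    have hkB : B.card = 4 := by exact_mod_cast hk4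
    have hBA : ∀ A : Finset (Fin 9), A.card = 4 → (0:Fin 9) ∈ A → (1:Fin 9) ∈ A →
        2 ≤ (B ∩ A).card := by
      intro A hA h0 h1
      have h := hdV A hA h0 h1
      rw [hzpt, hαv] at h
      rw [show ((2:ℝ)/3 - 1) = -1/3 by norm_num] at h
      rw [key] at h
      rw [hkB, hA] at h
      simp only [Set.mem_insert_iff, Set.mem_singleton_iff] at h
      by_contra hlt
      push_neg at hlt
      interval_cases hm : (B ∩ A).card <;> rcases h with h | h <;> norm_num at h
    have hmem : ∀ j : Fin 9, j = 0 ∨ j = 1 → j ∈ B := by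
      intro j hj
      by_contra hjB
      have hsub : ({0,1} : Finset (Fin 9)) ⊆ {0,1} ∪ Bᶜ := Finset.subset_union_left
      have hcardc : Bᶜ.card = 5 := by
        simp [Finset.card_compl, hkB]
      have hle : 4 ≤ ({0,1} ∪ Bᶜ : Finset (Fin 9)).card := by
        have h5 := Finset.card_le_card (Finset.subset_union_right :
          Bᶜ ⊆ ({0,1} : Finset (Fin 9)) ∪ Bᶜ)
        omega
      obtain ⟨A, hA1, hA2, hA3⟩ := Finset.exists_subsuperset_card_eq hsub (by decide) hle
      have h0A : (0:Fin 9) ∈ A := hA1 (by decide)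
      have h1A : (1:Fin 9) ∈ A := hA1 (by decide)
      have hinter : B ∩ A ⊆ {0,1} \ {j} := by
        intro x hx
        rw [Finset.mem_inter] at hx
        rcases Finset.mem_union.mp (hA2 hx.2) with h | h
        · rw [Finset.mem_sdiff]
          refine ⟨h, ?_⟩
          rw [Finset.mem_singleton]
          rintro rfl
          exact hjB hx.1
        · exact absurd hx.1 (Finset.mem_compl.mp h)
      have : (B ∩ A).card ≤ 1 := by
        calc (B ∩ A).card ≤ ({0,1} \ {j} : Finset (Fin 9)).card := Finset.card_le_card hinter
        _ ≤ 1 := by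
            rcases hj with rfl | rfl <;> decide
      have := hBA A hA3 h0A h1A
      omega
    refine ⟨B, hkB, hmem 0 (Or.inl rfl), hmem 1 (Or.inr rfl), ?_⟩
    rw [hzpt, hαv]
    ext i
    simp only [pt, vFour]
    norm_num
  · -- k = 7 : contradiction
    exfalso
    have hαv : α = 1/3 := by rw [hk7] at hsum1; linarith
    have hkB : B.card = 7 := by exact_mod_cast hk7
    have hcardc : Bᶜ.card = 2 := by rw [Finset.card_compl, hkB]; simp
    have hsub : ({0,1} ∪ Bᶜ : Finset (Fin 9)) ⊆ Finset.univ := Finset.subset_univ _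
    have hle : ({0,1} ∪ Bᶜ : Finset (Fin 9)).card ≤ 4 := by
      have h1 := Finset.card_union_le ({0,1} : Finset (Fin 9)) Bᶜ
      have h2 : ({0,1} : Finset (Fin 9)).card = 2 := by decide
      omega
    obtain ⟨A, hA1, _, hA3⟩ := Finset.exists_subsuperset_card_eq hsub hle (by simp)
    have h0A : (0:Fin 9) ∈ A := hA1 (Finset.mem_union_left _ (by decide))
    have h1A : (1:Fin 9) ∈ A := hA1 (Finset.mem_union_left _ (by decide))
    have hcA : Bᶜ ⊆ A := fun x hx => hA1 (Finset.mem_union_right _ hx)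
    have hAB : (A \ B).card = 2 := by
      have h1 : A \ B = Bᶜ := by
        apply Finset.Subset.antisymm
        · intro x hx; rw [Finset.mem_sdiff] at hx; exact Finset.mem_compl.mpr hx.2
        · intro x hx; rw [Finset.mem_sdiff]; exact ⟨hcA hx, Finset.mem_compl.mp hx⟩
      rw [h1, hcardc]
    have hm : (B ∩ A).card = 2 := by
      have := Finset.card_inter_add_card_sdiff A B
      rw [Finset.inter_comm]
      omega
    have h := hdV A hA3 h0A h1A
    rw [hzpt, hαv] at h
    rw [show ((1:ℝ)/3 - 1) = -2/3 by norm_num] at h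
    rw [key, hkB, hA3, hm] at h
    simp only [Set.mem_insert_iff, Set.mem_singleton_iff] at h
    rcases h with h | h <;> norm_num at h

lemma dist_sq (x y : E) : dist x y ^ 2 = ∑ i, (x i - y i)^2 := by
  rw [EuclideanSpace.dist_eq, Real.sq_sqrt (by positivity)]
  simp [Real.dist_eq, sq_abs]

lemma dist_of_sq_two {x y : E} (h : ∑ i, (x i - y i)^2 = 2) : dist x y = Real.sqrt 2 := by
  rw [← Real.sqrt_sq dist_nonneg, dist_sq, h]

lemma dist_of_sq_four {x y : E} (h : ∑ i, (x i - y i)^2 = 4) : dist x y = 2 := by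
  rw [← Real.sqrt_sq dist_nonneg, dist_sq, h]
  rw [show (4:ℝ) = 2^2 by norm_num, Real.sqrt_sq (by norm_num)]

lemma sq_of_dist_mem {x y : E} (h : dist x y ∈ ({Real.sqrt 2, 2} : Set ℝ)) :
    (∑ i, (x i - y i)^2) ∈ ({2, 4} : Set ℝ) := by
  rw [← dist_sq]
  rcases h with h | h <;> rw [h]
  · left; rw [Real.sq_sqrt (by norm_num)]
  · right; norm_num

lemma single_eq_pt (j : Fin 9) : EuclideanSpace.single j (1:ℝ) = pt {j} 1 0 := by
  ext i
  simp [pt, EuclideanSpace.single_apply, Finset.mem_singleton]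

lemma vFour_eq_pt (A : Finset (Fin 9)) : vFour A = pt A (2/3) (-1/3) := rfl

lemma vFour_injective : Function.Injective vFour := by
  intro A B h
  ext i
  have := congrFun (congrArg WithLp.ofLp h) i
  simp only [vFour] at this
  by_cases hA : i ∈ A <;> by_cases hB : i ∈ B <;> simp [hA, hB] at this ⊢ <;> norm_num at this

lemma single_injective : Function.Injective (fun j : Fin 9 => EuclideanSpace.single j (1:ℝ)) := by
  intro i j h
  have := congrFun (congrArg WithLp.ofLp h) i
  simp only [EuclideanSpace.single_apply, if_pos rfl] at this
  by_contra hne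
  rw [if_neg hne] at this
  norm_num at this

lemma simplex_vFour_disjoint (j : Fin 9) (A : Finset (Fin 9)) :
    EuclideanSpace.single j (1:ℝ) ≠ vFour A := by
  intro h
  have := congrFun (congrArg WithLp.ofLp h) j
  simp only [EuclideanSpace.single_apply, if_pos rfl, vFour] at this
  by_cases hA : j ∈ A <;> simp [hA] at this <;> norm_num at this

def Sfam : Set (Finset (Fin 9)) :=
  {A : Finset (Fin (8+1)) | A.card = 4 ∧ (0 : Fin (8+1)) ∈ A ∧ (1 : Fin (8+1)) ∈ A}

def Xset : Set E := simplex 8 ∪ vFour '' Sfam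

lemma sqrt2_ne_two : Real.sqrt 2 ≠ 2 := by
  intro h
  have h2 := Real.sq_sqrt (show (0:ℝ) ≤ 2 by norm_num)
  rw [h] at h2
  norm_num at h2

-- distances
lemma dist_ee {i j : Fin 9} (hij : i ≠ j) :
    dist (EuclideanSpace.single i (1:ℝ)) (EuclideanSpace.single j (1:ℝ)) = Real.sqrt 2 := by
  apply dist_of_sq_two
  rw [single_eq_pt, single_eq_pt, key]
  have : ({i} ∩ {j} : Finset (Fin 9)).card = 0 := by
    rw [Finset.card_eq_zero]
    ext x
    simp only [Finset.mem_inter, Finset.mem_singleton, Finset.notMem_empty, iff_false]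
    rintro ⟨rfl, rfl⟩
    exact hij rfl
  rw [this]
  norm_num

lemma sq_ev (i : Fin 9) (A : Finset (Fin 9)) (hA : A.card = 4) :
    ∑ k, (EuclideanSpace.single i (1:ℝ) k - vFour A k)^2
      = 4 - 2 * (({i} ∩ A : Finset (Fin 9)).card : ℝ) := by
  rw [single_eq_pt, vFour_eq_pt, key, hA]
  norm_num
  ring

lemma dist_ev_mem {i : Fin 9} {A : Finset (Fin 9)} (hA : A.card = 4) (h : i ∈ A) :
    dist (EuclideanSpace.single i (1:ℝ)) (vFour A) = Real.sqrt 2 := by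
  apply dist_of_sq_two
  rw [sq_ev i A hA, Finset.singleton_inter_of_mem h]
  norm_num

lemma dist_ev_not {i : Fin 9} {A : Finset (Fin 9)} (hA : A.card = 4) (h : i ∉ A) :
    dist (EuclideanSpace.single i (1:ℝ)) (vFour A) = 2 := by
  apply dist_of_sq_four
  rw [sq_ev i A hA, Finset.singleton_inter_of_notMem h]
  norm_num

lemma dist_vv {A B : Finset (Fin 9)} (hA : A ∈ Sfam) (hB : B ∈ Sfam) (hAB : A ≠ B) :
    dist (vFour A) (vFour B) = Real.sqrt 2 ∨ dist (vFour A) (vFour B) = 2 := by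
  obtain ⟨hA4, hA0, hA1⟩ := hA
  obtain ⟨hB4, hB0, hB1⟩ := hB
  have hsq : ∑ k, (vFour A k - vFour B k)^2 = 8 - 2 * ((A ∩ B).card : ℝ) := by
    rw [vFour_eq_pt, vFour_eq_pt, key, hA4, hB4]
    norm_num
    ring
  have hm2 : 2 ≤ (A ∩ B).card := by
    have hsub : ({0,1} : Finset (Fin 9)) ⊆ A ∩ B := by
      intro x hx
      rw [Finset.mem_inter]
      rcases Finset.mem_insert.mp hx with rfl | hx
      · exact ⟨hA0, hB0⟩
      · rw [Finset.mem_singleton] at hx; subst hx; exact ⟨hA1, hB1⟩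
    have := Finset.card_le_card hsub
    simpa using this
  have hm3 : (A ∩ B).card ≤ 3 := by
    by_contra h
    push_neg at h
    have hle : A.card ≤ (A ∩ B).card := by omega
    have h1 : A ∩ B = A := Finset.eq_of_subset_of_card_le Finset.inter_subset_left hle
    have hAsubB : A ⊆ B := by rw [← h1]; exact Finset.inter_subset_right
    exact hAB (Finset.eq_of_subset_of_card_le hAsubB (by omega))
  interval_cases hm : (A ∩ B).card
  · right; apply dist_of_sq_four; rw [hsq]; norm_num
  · left; apply dist_of_sq_two; rw [hsq]; norm_num

lemma Xsub : Xset ⊆ Hplane 8 := by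
  rintro x (⟨i, rfl⟩ | ⟨A, ⟨hA4, -, -⟩, rfl⟩)
  · show ∑ k, EuclideanSpace.single i (1:ℝ) k = 1
    rw [single_eq_pt, sum_pt]
    norm_num
  · show ∑ k, _ = 1
    rw [vFour_eq_pt, sum_pt, hA4]
    norm_num

lemma Xcard : Xset.ncard = 30 := by
  have h1 : (simplex 8).ncard = 9 := by
    rw [simplex, ← Set.image_univ, Set.ncard_image_of_injective _ single_injective,
      Set.ncard_univ]
    simp
  have h2 : (vFour '' Sfam).ncard = 21 := by
    rw [Set.ncard_image_of_injective _ vFour_injective]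
    have : Sfam = ↑(Finset.univ.filter
        (fun A : Finset (Fin 9) => A.card = 4 ∧ (0:Fin 9) ∈ A ∧ (1:Fin 9) ∈ A)) := by
      ext A; simp [Sfam]
    rw [this, Set.ncard_coe_finset]
    decide
  have hdisj : Disjoint (simplex 8) (vFour '' Sfam) := by
    rw [Set.disjoint_left]
    rintro x ⟨i, rfl⟩ ⟨A, -, hA⟩
    exact simplex_vFour_disjoint i A hA.symm
  rw [Xset, Set.ncard_union_eq hdisj (Set.finite_range _)
    ((Set.toFinite Sfam).image _), h1, h2]

lemma XdistSet : distSet Xset = {Real.sqrt 2, 2} := by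
  ext r
  constructor
  · rintro ⟨x, hx, y, hy, hxy, rfl⟩
    rcases hx with ⟨i, rfl⟩ | ⟨A, hA, rfl⟩ <;> rcases hy with ⟨j, rfl⟩ | ⟨B, hB, rfl⟩
    · left
      exact dist_ee (fun h => hxy (by rw [h]))
    · by_cases h : i ∈ B
      · left; exact dist_ev_mem hB.1 h
      · right; exact dist_ev_not hB.1 h
    · rw [dist_comm]
      by_cases h : j ∈ A
      · left; exact dist_ev_mem hA.1 h
      · right; exact dist_ev_not hA.1 h
    · exact dist_vv hA hB (fun h => hxy (by rw [h]))
  · have hA0 : ({0,1,3,4} : Finset (Fin 9)) ∈ Sfam := by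
      constructor
      · decide
      · constructor <;> decide
    rintro (rfl | rfl)
    · exact ⟨EuclideanSpace.single 0 1, Or.inl ⟨0, rfl⟩,
        EuclideanSpace.single 1 1, Or.inl ⟨1, rfl⟩,
        fun h => absurd (single_injective h) (by decide), dist_ee (by decide)⟩
    · exact ⟨EuclideanSpace.single 2 1, Or.inl ⟨2, rfl⟩,
        vFour {0,1,3,4}, Or.inr ⟨_, hA0, rfl⟩,
        simplex_vFour_disjoint 2 _, dist_ev_not hA0.1 (by decide)⟩

lemma Xmax : ∀ z ∈ Hplane 8, z ∉ Xset → ¬ IsTwoDistSet (Xset ∪ {z}) := by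
  intro z hz hzX h2
  have hmono : distSet Xset ⊆ distSet (Xset ∪ {z}) := by
    rintro r ⟨x, hx, y, hy, hxy, rfl⟩
    exact ⟨x, Or.inl hx, y, Or.inl hy, hxy, rfl⟩
  have hsub : ({Real.sqrt 2, 2} : Set ℝ) ⊆ distSet (Xset ∪ {z}) := XdistSet ▸ hmono
  have hfin : (distSet (Xset ∪ {z})).Finite :=
    Set.finite_of_ncard_ne_zero (by rw [h2]; norm_num)
  have heq : distSet (Xset ∪ {z}) = {Real.sqrt 2, 2} := by
    refine (Set.eq_of_subset_of_ncard_le hsub ?_ hfin).symm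
    rw [h2, Set.ncard_pair sqrt2_ne_two]
  have hall : ∀ x ∈ Xset, dist z x ∈ ({Real.sqrt 2, 2} : Set ℝ) := by
    intro x hx
    rw [← heq]
    exact ⟨z, Or.inr rfl, x, Or.inl hx, fun h => hzX (h ▸ hx), rfl⟩
  have hdS : ∀ j : Fin 9, (∑ i, (z i - pt {j} 1 0 i)^2) ∈ ({2,4} : Set ℝ) := by
    intro j
    rw [← single_eq_pt]
    exact sq_of_dist_mem (hall _ (Or.inl ⟨j, rfl⟩))
  have hdV : ∀ A : Finset (Fin 9), A.card = 4 → (0:Fin 9) ∈ A → (1:Fin 9) ∈ A →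
      (∑ i, (z i - pt A (2/3) (-1/3) i)^2) ∈ ({2,4} : Set ℝ) := by
    intro A h4 h0 h1
    rw [← vFour_eq_pt]
    exact sq_of_dist_mem (hall _ (Or.inr ⟨A, ⟨h4, h0, h1⟩, rfl⟩))
  obtain ⟨B, hB4, hB0, hB1, rfl⟩ := max_key z hz hdS hdV
  exact hzX (Or.inr ⟨B, ⟨hB4, hB0, hB1⟩, rfl⟩)

end S18

theorem stmt18 :
    (simplex 8 ∪ vFour ''
        {A : Finset (Fin (8+1)) | A.card = 4 ∧ (0 : Fin (8+1)) ∈ A ∧ (1 : Fin (8+1)) ∈ A})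
      ⊆ Hplane 8 ∧
    (simplex 8 ∪ vFour ''
        {A : Finset (Fin (8+1)) | A.card = 4 ∧ (0 : Fin (8+1)) ∈ A ∧ (1 : Fin (8+1)) ∈ A}).ncard
      = 30 ∧
    distSet (simplex 8 ∪ vFour ''
        {A : Finset (Fin (8+1)) | A.card = 4 ∧ (0 : Fin (8+1)) ∈ A ∧ (1 : Fin (8+1)) ∈ A})
      = {Real.sqrt 2, 2} ∧
    ∀ z ∈ Hplane 8,
      z ∉ (simplex 8 ∪ vFour ''
        {A : Finset (Fin (8+1)) | A.card = 4 ∧ (0 : Fin (8+1)) ∈ A ∧ (1 : Fin (8+1)) ∈ A}) →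
      ¬ IsTwoDistSet ((simplex 8 ∪ vFour ''
        {A : Finset (Fin (8+1)) | A.card = 4 ∧ (0 : Fin (8+1)) ∈ A ∧ (1 : Fin (8+1)) ∈ A})
        ∪ {z}) :=
  ⟨S18.Xsub, S18.Xcard, S18.XdistSet, S18.Xmax⟩
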